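/- Let G be a finite graph with uniform edge length δ, K a connected vertex set with boundary ∂K, d_K the path metric using only paths whose interior vertices lie in K, and x₀ ∈ ∂K. Then u(x) = d_K(x₀, x) satisfies Δ∞u(x) ≤ 0 for all x ∈ K, and v(x) = −d_K(x₀, x) satisfies Δ∞v(x) ≥ 0 for all x ∈ K. -/

import Mathlib

open Filter Topology
open scoped Classical

noncomputable section

variable {V : Type*}

/-- A path from `x` to `y` whose interior vertices `l` all lie in `K`. -/
def pathIn (adj : V → V → Prop) (K : Set V) (x y : V) (l : List V) : Prop :=
  List.Chain adj x (l ++ [y]) ∧ ∀ z ∈ l, z ∈ K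

/-- The restricted path metric `d_K` (edge length `δ`), via paths with interior in `K`. -/
def dK (adj : V → V → Prop) (K : Set V) (δ : ℝ) (x y : V) : ℝ :=
  if x = y then 0
  else sInf {r : ℝ | ∃ l : List V, pathIn adj K x y l ∧ r = δ * (l.length + 1)}

/-- The boundary of a vertex set `K`. -/
def bdry (adj : V → V → Prop) (K : Set V) : Set V :=
  {y | y ∉ K ∧ ∃ x ∈ K, adj x y}

/-- The graph infinity Laplacian. -/
def lapInf (adj : V → V → Prop) (u : V → ℝ) (x : V) : ℝ :=
  sSup ((fun y => u y - u x) '' {y | adj x y}) +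
    sInf ((fun y => u y - u x) '' {y | adj x y})

/-- The local Lipschitz constant `F(u,x)` at a vertex `x`. -/
def locLip (adj : V → V → Prop) (δ : ℝ) (u : V → ℝ) (x : V) : ℝ :=
  sSup ((fun y => |u x - u y| / δ) '' {y | adj x y})

/-- The Lipschitz constant of `u` over the set `A`, measured in the metric `d_K`. -/
def LipOn (adj : V → V → Prop) (K A : Set V) (δ : ℝ) (u : V → ℝ) : ℝ :=
  sSup {r : ℝ | ∃ x ∈ A, ∃ y ∈ A, x ≠ y ∧ r = |u x - u y| / dK adj K δ x y}

/-- `K` is connected: any two points of `K ∪ ∂K` are joined by a path through `K`. -/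
def connectedIn (adj : V → V → Prop) (K : Set V) : Prop :=
  ∀ x ∈ K ∪ bdry adj K, ∀ y ∈ K ∪ bdry adj K, x ≠ y → ∃ l, pathIn adj K x y l

namespace Stmt3Aux

variable {adj : V → V → Prop} {K : Set V} {δ : ℝ}

lemma dset_lb (hδ : 0 < δ) {x y : V} :
    ∀ r ∈ {r : ℝ | ∃ l : List V, pathIn adj K x y l ∧ r = δ * (l.length + 1)}, δ ≤ r := by
  rintro r ⟨l, _, rfl⟩
  have h0 : (0 : ℝ) ≤ (l.length : ℝ) := Nat.cast_nonneg _
  nlinarith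

lemma dK_le (hδ : 0 < δ) {x y : V} {l : List V} (hxy : x ≠ y) (h : pathIn adj K x y l) :
    dK adj K δ x y ≤ δ * (l.length + 1) := by
  rw [dK, if_neg hxy]
  exact csInf_le ⟨δ, dset_lb hδ⟩ ⟨l, h, rfl⟩

lemma dK_nonneg (hδ : 0 < δ) (x y : V) : 0 ≤ dK adj K δ x y := by
  rw [dK]
  split
  · exact le_refl 0
  · exact Real.sInf_nonneg (fun r hr => le_trans hδ.le (dset_lb hδ r hr))

lemma pathIn_snoc {x y z : V} {l : List V} (h : pathIn adj K x y l) (hy : y ∈ K)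
    (hz : adj y z) : pathIn adj K x z (l ++ [y]) := by
  refine ⟨?_, ?_⟩
  · have he : (l ++ [y]) ++ [z] = l ++ y :: [z] := by simp
    rw [he, List.Chain, List.isChain_cons_split]
    exact ⟨h.1, List.Chain.cons hz List.Chain.nil⟩
  · intro w hw
    rcases List.mem_append.1 hw with h' | h'
    · exact h.2 w h'
    · simp at h'; subst h'; exact hy

/-- A minimal-length path realizes `dK`. -/
lemma exists_min_path (hδ : 0 < δ) {x y : V} (hxy : x ≠ y)
    (hne : ∃ l, pathIn adj K x y l) :
    ∃ l, pathIn adj K x y l ∧ dK adj K δ x y = δ * (l.length + 1) ∧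
      ∀ l', pathIn adj K x y l' → l.length ≤ l'.length := by
  have hP : ∃ n, ∃ l, pathIn adj K x y l ∧ l.length = n := by
    obtain ⟨l, hl⟩ := hne; exact ⟨l.length, l, hl, rfl⟩
  obtain ⟨l, hl, hlen⟩ := Nat.find_spec hP
  have hmin : ∀ l', pathIn adj K x y l' → l.length ≤ l'.length := by
    intro l' hl'
    rw [hlen]
    exact Nat.find_min' hP ⟨l', hl', rfl⟩
  refine ⟨l, hl, ?_, hmin⟩
  rw [dK, if_neg hxy]
  have hleast : IsLeast {r : ℝ | ∃ l : List V, pathIn adj K x y l ∧ r = δ * (l.length + 1)}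
      (δ * (l.length + 1)) := by
    constructor
    · exact ⟨l, hl, rfl⟩
    · rintro r ⟨l', hl', rfl⟩
      have h1 : (l.length : ℝ) + 1 ≤ (l'.length : ℝ) + 1 := by
        have := hmin l' hl'; exact_mod_cast Nat.succ_le_succ this
      nlinarith
  exact hleast.csInf_eq

end Stmt3Aux

open Stmt3Aux in
/-- `d_K(x₀,·)` is a supersolution and `-d_K(x₀,·)` a subsolution of the infinity Laplacian. -/
theorem stmt3 [Fintype V] (adj : V → V → Prop) (hsymm : ∀ x y, adj x y → adj y x)
    (δ : ℝ) (hδ : 0 < δ) (K : Set V) (hconn : connectedIn adj K)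
    (x₀ : V) (hx₀ : x₀ ∈ bdry adj K) :
    (∀ x ∈ K, lapInf adj (fun y => dK adj K δ x₀ y) x ≤ 0) ∧
    (∀ x ∈ K, 0 ≤ lapInf adj (fun y => -dK adj K δ x₀ y) x) := by
  set u : V → ℝ := fun y => dK adj K δ x₀ y with hu
  have hx₀K : x₀ ∉ K := hx₀.1
  -- key facts for each x ∈ K
  have key : ∀ x ∈ K, (∃ y, adj x y ∧ u y ≤ u x - δ) ∧ (∀ z, adj x z → u z ≤ u x + δ) := by
    intro x hxK
    have hxne : x₀ ≠ x := fun h => hx₀K (h ▸ hxK)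
    have hpath : ∃ l, pathIn adj K x₀ x l :=
      hconn x₀ (Or.inr hx₀) x (Or.inl hxK) hxne
    obtain ⟨l, hl, hval, hmin⟩ := exists_min_path (adj := adj) (K := K) hδ hxne hpath
    have hux : u x = δ * (l.length + 1) := hval
    constructor
    · -- exists a neighbor with smaller value
      rcases List.eq_nil_or_concat l with rfl | ⟨l', y, rfl⟩
      · -- l = []: the predecessor is x₀
        have hadj : adj x₀ x := by
          have := hl.1
          simpa [List.Chain] using this
        refine ⟨x₀, hsymm _ _ hadj, ?_⟩
        have hux0 : u x₀ = 0 := by simp [hu, dK]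
        rw [hux0, hux]
        simp only [List.length_nil]
        norm_num
      · -- l = l' ++ [y]
        simp only [List.concat_eq_append] at hl hval hmin hux
        have hchain := hl.1
        have he : (l' ++ [y]) ++ [x] = l' ++ y :: [x] := by simp
        rw [he, List.Chain, List.isChain_cons_split] at hchain
        have hadjyx : adj y x := by
          have := hchain.2
          exact (List.chain_cons.1 this).1
        have hyK : y ∈ K := hl.2 y (by simp)
        have hyne : x₀ ≠ y := fun h => hx₀K (h ▸ hyK)
        have hpy : pathIn adj K x₀ y l' := ⟨hchain.1, fun z hz => hl.2 z (by simp [hz])⟩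
        refine ⟨y, hsymm _ _ hadjyx, ?_⟩
        have h1 : u y ≤ δ * (l'.length + 1) := dK_le hδ hyne hpy
        rw [hux]
        simp only [List.length_append, List.length_singleton]
        push_cast
        linarith
    · -- all neighbors at most u x + δ
      intro z hz
      by_cases hzx0 : x₀ = z
      · have huz : u z = 0 := by simp [hu, ← hzx0, dK]
        have hxnn : (0:ℝ) ≤ u x := dK_nonneg hδ x₀ x
        rw [huz]
        linarith
      · have hp : pathIn adj K x₀ z (l ++ [x]) := pathIn_snoc hl hxK hz
        have h1 : u z ≤ δ * ((l ++ [x]).length + 1) := dK_le hδ hzx0 hp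
        rw [hux]
        simp only [List.length_append, List.length_singleton] at h1
        push_cast at h1 ⊢
        linarith
  constructor
  · intro x hxK
    obtain ⟨⟨y, hy, hyle⟩, hall⟩ := key x hxK
    set s := (fun y => u y - u x) '' {y | adj x y} with hs
    have hfin : s.Finite := (Set.toFinite _).image _
    have hmem : u y - u x ∈ s := ⟨y, hy, rfl⟩
    have h1 : sSup s ≤ δ := by
      refine Real.sSup_le ?_ hδ.le
      rintro r ⟨z, hz, rfl⟩
      have := hall z hz
      show u z - u x ≤ δ
      linarith
    have h2 : sInf s ≤ -δ := by
      have := csInf_le hfin.bddBelow hmem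
      linarith
    show sSup s + sInf s ≤ 0
    linarith
  · intro x hxK
    obtain ⟨⟨y, hy, hyle⟩, hall⟩ := key x hxK
    set s := (fun z => -u z - -u x) '' {y | adj x y} with hs
    have hfin : s.Finite := (Set.toFinite _).image _
    have hmem : -u y - -u x ∈ s := ⟨y, hy, rfl⟩
    have h1 : δ ≤ sSup s := by
      refine le_trans ?_ (le_csSup hfin.bddAbove hmem)
      linarith
    have h2 : -δ ≤ sInf s := by
      refine le_csInf ⟨_, hmem⟩ ?_
      rintro r ⟨z, hz, rfl⟩
      have := hall z hz
      show -δ ≤ -u z - -u x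
      linarith
    show 0 ≤ sSup s + sInf s
    linarith
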